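/- Let W be a k-wheel with center v₀ and spokes v₁,…,v_k, and let T be a coupled spanning tree of W. Then at least one of the following holds: (a) for all i ∈ [1,k], v₀v_i ∈ T if and only if v_i v_{i+1} ∉ T; or (b) for all i ∈ [1,k], v₀v_i ∈ T if and only if v_{i-1} v_i ∉ T (spoke indices cyclic modulo k). -/

import Mathlib

/-- The edge set of the `k`-wheel `W(v₀; v₁,…,v_k)`: the center is `none`,
the spokes are `some i` for `i : ZMod k` (cyclic indexing). -/
def wheelEdges (k : ℕ) : Set (Sym2 (Option (ZMod k))) :=
  {e | ∃ i : ZMod k, e = s(none, some i) ∨ e = s(some i, some (i + 1))}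

/-- `T` is a coupled spanning tree of the `k`-wheel. -/
def IsCoupledTree (k : ℕ) (T : Set (Sym2 (Option (ZMod k)))) : Prop :=
  T ⊆ wheelEdges k ∧ (SimpleGraph.fromEdgeSet T).IsTree ∧
    (SimpleGraph.fromEdgeSet (wheelEdges k \ T)).IsTree

namespace WheelAux

open SimpleGraph Walk

variable {V : Type*} {G : SimpleGraph V}

section Tree

variable [DecidableEq V] (hG : G.IsTree) (r : V)

/-- The unique path from `u` to the root `r` in the tree `G`. -/
noncomputable def pth (u : V) : G.Walk u r := (hG.existsUnique_path u r).choose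

lemma pth_isPath (u : V) : (pth hG r u).IsPath :=
  (hG.existsUnique_path u r).choose_spec.1

lemma pth_unique {u : V} (p : G.Walk u r) (hp : p.IsPath) : p = pth hG r u :=
  (hG.existsUnique_path u r).choose_spec.2 p hp

/-- The parent of `u` in the tree rooted at `r`. -/
noncomputable def nxt (u : V) : V := (pth hG r u).getVert 1

lemma pth_not_nil {u : V} (hu : u ≠ r) : ¬ (pth hG r u).Nil := by
  rw [nil_iff_length_eq]
  intro h
  exact hu (eq_of_length_eq_zero h)

lemma adj_nxt {u : V} (hu : u ≠ r) : G.Adj u (nxt hG r u) :=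
  adj_snd (pth_not_nil hG r hu)

lemma pth_length_eq {u : V} (hu : u ≠ r) :
    (pth hG r u).length = (pth hG r (nxt hG r u)).length + 1 := by
  obtain ⟨w, h, q, hq⟩ := (not_nil_iff).mp (pth_not_nil hG r hu)
  have hqPath : q.IsPath := by
    have := pth_isPath hG r u
    rw [hq] at this
    exact this.of_cons
  have hw : nxt hG r u = w := by
    unfold nxt
    rw [hq, getVert_cons_succ (n := 0), getVert_zero]
  subst hw
  have : q = pth hG r (nxt hG r u) := pth_unique hG r q hqPath
  rw [hq, ← this]
  simp

lemma no_mutual {u v : V} (hu : u ≠ r) (hv : v ≠ r)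
    (h1 : nxt hG r u = v) (h2 : nxt hG r v = u) : False := by
  have e1 := pth_length_eq hG r hu
  have e2 := pth_length_eq hG r hv
  rw [h1] at e1
  rw [h2] at e2
  omega

lemma nxt_eq_of_adj_root {u : V} (h : G.Adj u r) : nxt hG r u = r := by
  have hp : (Walk.cons h Walk.nil).IsPath := by
    simp [h.ne]
  have := pth_unique hG r _ hp
  unfold nxt
  rw [← this]
  simp [getVert_cons_succ (n := 0)]

lemma nxt_or_of_adj {u v : V} (hu : u ≠ r) (hv : v ≠ r) (h : G.Adj u v) :
    nxt hG r u = v ∨ nxt hG r v = u := by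
  by_contra hcon
  push_neg at hcon
  obtain ⟨h1, h2⟩ := hcon
  by_cases hW : (Walk.cons h (pth hG r v)).IsPath
  · apply h1
    have := pth_unique hG r _ hW
    unfold nxt
    rw [← this, getVert_cons_succ (n := 0), getVert_zero]
  by_cases hW' : (Walk.cons h.symm (pth hG r u)).IsPath
  · apply h2
    have := pth_unique hG r _ hW'
    unfold nxt
    rw [← this, getVert_cons_succ (n := 0), getVert_zero]
  rw [cons_isPath_iff] at hW hW'
  have huv : u ∈ (pth hG r v).support := by
    by_contra hmem
    exact hW ⟨pth_isPath hG r v, hmem⟩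
  have hvu : v ∈ (pth hG r u).support := by
    by_contra hmem
    exact hW' ⟨pth_isPath hG r u, hmem⟩
  -- drop-until gives suffix paths, which coincide with unique paths; compare lengths
  have hd1 : ((pth hG r v).dropUntil u huv) = pth hG r u :=
    pth_unique hG r _ ((pth_isPath hG r v).dropUntil huv)
  have hd2 : ((pth hG r u).dropUntil v hvu) = pth hG r v :=
    pth_unique hG r _ ((pth_isPath hG r u).dropUntil hvu)
  have hl1 : ((pth hG r v).takeUntil u huv).length
      + ((pth hG r v).dropUntil u huv).length = (pth hG r v).length := by
    rw [← length_append, take_spec]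
  have hl2 : ((pth hG r u).takeUntil v hvu).length
      + ((pth hG r u).dropUntil v hvu).length = (pth hG r u).length := by
    rw [← length_append, take_spec]
  have ht1 : ((pth hG r v).takeUntil u huv).length ≠ 0 := by
    intro h0
    exact h.ne (eq_of_length_eq_zero h0).symm
  have ht2 : ((pth hG r u).takeUntil v hvu).length ≠ 0 := by
    intro h0
    exact h.ne (eq_of_length_eq_zero h0)
  rw [hd1] at hl1
  rw [hd2] at hl2
  omega

end Tree

section Wheel

variable {k : ℕ}

lemma spoke_mem_wheel (i : ZMod k) : s(none, some i) ∈ wheelEdges k := ⟨i, Or.inl rfl⟩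

lemma chord_mem_wheel (i : ZMod k) : s(some i, some (i + 1)) ∈ wheelEdges k := ⟨i, Or.inr rfl⟩

lemma wheel_shape (hk : 3 ≤ k) {i : ZMod k} {x : Option (ZMod k)}
    (h : s(some i, x) ∈ wheelEdges k) :
    x = none ∨ x = some (i + 1) ∨ x = some (i - 1) := by
  obtain ⟨j, hj | hj⟩ := h <;> rw [Sym2.eq_iff] at hj
  · rcases hj with ⟨h1, _⟩ | ⟨h1, h2⟩
    · exact absurd h1 (by simp)
    · exact Or.inl h2
  · rcases hj with ⟨h1, h2⟩ | ⟨h1, h2⟩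
    · refine Or.inr (Or.inl ?_)
      rw [h2]
      injection h1 with h1
      rw [h1]
    · refine Or.inr (Or.inr ?_)
      rw [h2]
      injection h1 with h1
      rw [h1]
      congr 1
      ring

lemma two_ne_zero' (hk : 3 ≤ k) : (2 : ZMod k) ≠ 0 := by
  intro h
  have : ((2 : ℕ) : ZMod k) = 0 := by exact_mod_cast h
  rw [ZMod.natCast_eq_zero_iff] at this
  have := Nat.le_of_dvd (by norm_num) this
  omega

lemma one_ne_zero' (hk : 3 ≤ k) : (1 : ZMod k) ≠ 0 := by
  intro h
  have : ((1 : ℕ) : ZMod k) = 0 := by exact_mod_cast h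
  rw [ZMod.natCast_eq_zero_iff] at this
  have := Nat.le_of_dvd (by norm_num) this
  omega

/-- The parent function for a spanning tree contained in the wheel. -/
lemma exists_parent (hk : 3 ≤ k) {E : Set (Sym2 (Option (ZMod k)))}
    (hE : E ⊆ wheelEdges k) (htree : (SimpleGraph.fromEdgeSet E).IsTree) :
    ∃ N : ZMod k → Option (ZMod k),
      (∀ i, s(some i, N i) ∈ E) ∧
      (∀ i, N i = none ∨ N i = some (i + 1) ∨ N i = some (i - 1)) ∧
      (∀ i, s(none, some i) ∈ E ↔ N i = none) ∧
      (∀ i, s(some i, some (i + 1)) ∈ E →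
        N i = some (i + 1) ∨ N (i + 1) = some i) ∧
      (∀ i, ¬ (N i = some (i + 1) ∧ N (i + 1) = some i)) := by
  classical
  refine ⟨fun i => nxt htree none (some i), ?_, ?_, ?_, ?_, ?_⟩
  · intro i
    have hadj := adj_nxt htree none (show (some i : Option (ZMod k)) ≠ none by simp)
    rw [SimpleGraph.fromEdgeSet_adj] at hadj
    exact hadj.1
  · intro i
    have hadj := adj_nxt htree none (show (some i : Option (ZMod k)) ≠ none by simp)
    rw [SimpleGraph.fromEdgeSet_adj] at hadj
    exact wheel_shape hk (hE hadj.1)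
  · intro i
    constructor
    · intro hs
      apply nxt_eq_of_adj_root
      rw [SimpleGraph.fromEdgeSet_adj]
      exact ⟨by rw [Sym2.eq_swap]; exact hs, by simp⟩
    · intro hn
      replace hn : nxt htree none (some i) = none := hn
      have hadj := adj_nxt htree none (show (some i : Option (ZMod k)) ≠ none by simp)
      rw [SimpleGraph.fromEdgeSet_adj] at hadj
      rw [hn] at hadj
      rw [Sym2.eq_swap]
      exact hadj.1
  · intro i hc
    apply nxt_or_of_adj htree none (by simp) (by simp)
    rw [SimpleGraph.fromEdgeSet_adj]
    refine ⟨hc, ?_⟩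
    intro h
    injection h with h
    apply one_ne_zero' hk
    have := sub_eq_zero_of_eq h.symm
    rwa [show i + 1 - i = 1 by ring] at this
  · intro i hh
    exact no_mutual htree none (by simp) (by simp) hh.1 hh.2

end Wheel

end WheelAux

theorem stmt1 (k : ℕ) (hk : 3 ≤ k) (T : Set (Sym2 (Option (ZMod k))))
    (hT : IsCoupledTree k T) :
    (∀ i : ZMod k, s(none, some i) ∈ T ↔ s(some i, some (i + 1)) ∉ T) ∨
    (∀ i : ZMod k, s(none, some i) ∈ T ↔ s(some (i - 1), some i) ∉ T) := by
  classical
  obtain ⟨hsub, hT1, hT2⟩ := hT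
  have hsub2 : wheelEdges k \ T ⊆ wheelEdges k := Set.diff_subset
  obtain ⟨N, hNmem, hNshape, hNspoke, hNchord, hNmut⟩ :=
    WheelAux.exists_parent hk hsub hT1
  obtain ⟨M, hMmem, hMshape, hMspoke, hMchord, hMmut⟩ :=
    WheelAux.exists_parent hk hsub2 hT2
  haveI : NeZero k := ⟨by omega⟩
  have h2 : (2 : ZMod k) ≠ 0 := WheelAux.two_ne_zero' hk
  -- basic distinctness
  have hne : ∀ i : ZMod k, (some (i + 1) : Option (ZMod k)) ≠ some (i - 1) := by
    intro i h
    injection h with h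
    apply h2
    have := sub_eq_zero_of_eq h
    rw [show i + 1 - (i - 1) = 2 by ring] at this
    exact this
  -- chord membership dichotomy
  have hdichot : ∀ i : ZMod k,
      s(some i, some (i + 1)) ∈ T ∨ s(some i, some (i + 1)) ∈ wheelEdges k \ T := by
    intro i
    by_cases h : s(some i, some (i + 1)) ∈ T
    · exact Or.inl h
    · exact Or.inr ⟨WheelAux.chord_mem_wheel i, h⟩
  set L : ZMod k → Prop := fun i => N i = some (i + 1) ∨ M i = some (i + 1) with hLdef
  set R : ZMod k → Prop := fun i => N i = some (i - 1) ∨ M i = some (i - 1) with hRdef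
  have hLiff : ∀ i, L i ↔ (N i = some (i + 1) ∨ M i = some (i + 1)) := fun i => Iff.rfl
  have hRiff : ∀ i, R i ↔ (N i = some (i - 1) ∨ M i = some (i - 1)) := fun i => Iff.rfl
  have hsucc : ∀ i : ZMod k, i + 1 - 1 = i := fun i => by ring
  -- vertex condition
  have vertex : ∀ i, L i ↔ ¬ R i := by
    intro i
    rw [hLiff, hRiff]
    by_cases hs : s(none, some i) ∈ T
    · have hN0 : N i = none := (hNspoke i).mp hs
      have hM0 : M i ≠ none := fun h => ((hMspoke i).mpr h).2 hs
      have hNa : N i ≠ some (i + 1) := by rw [hN0]; simp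
      have hNb : N i ≠ some (i - 1) := by rw [hN0]; simp
      rcases hMshape i with h | h | h
      · exact absurd h hM0
      · have hMb : M i ≠ some (i - 1) := by rw [h]; exact hne i
        tauto
      · have hMa : M i ≠ some (i + 1) := by
          rw [h]; intro hh; exact hne i hh.symm
        tauto
    · have hM0 : M i = none := (hMspoke i).mp ⟨WheelAux.spoke_mem_wheel i, hs⟩
      have hN0 : N i ≠ none := fun h => hs ((hNspoke i).mpr h)
      have hMa : M i ≠ some (i + 1) := by rw [hM0]; simp
      have hMb : M i ≠ some (i - 1) := by rw [hM0]; simp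
      rcases hNshape i with h | h | h
      · exact absurd h hN0
      · have hNb : N i ≠ some (i - 1) := by rw [h]; exact hne i
        tauto
      · have hNa : N i ≠ some (i + 1) := by
          rw [h]; intro hh; exact hne i hh.symm
        tauto
  -- chord condition
  have chord : ∀ i, L i ↔ ¬ R (i + 1) := by
    intro i
    have hR1 : R (i + 1) ↔ (N (i + 1) = some i ∨ M (i + 1) = some i) := by
      rw [hRiff, hsucc i]
    rw [hLiff, hR1]
    rcases hdichot i with hc | hc
    · have hMa : M i ≠ some (i + 1) := by
        intro h
        have := hMmem i
        rw [h] at this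
        exact this.2 hc
      have hMb : M (i + 1) ≠ some i := by
        intro h
        have := hMmem (i + 1)
        rw [h, Sym2.eq_swap] at this
        exact this.2 hc
      have hor := hNchord i hc
      have hnm := hNmut i
      constructor
      · rintro (h | h)
        · rintro (h' | h')
          · exact hnm ⟨h, h'⟩
          · exact hMb h'
        · exact absurd h hMa
      · intro h
        rcases hor with h' | h'
        · exact Or.inl h'
        · exact absurd (Or.inl h') h
    · have hNa : N i ≠ some (i + 1) := by
        intro h
        have := hNmem i
        rw [h] at this
        exact hc.2 this
      have hNb : N (i + 1) ≠ some i := by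
        intro h
        have := hNmem (i + 1)
        rw [h, Sym2.eq_swap] at this
        exact hc.2 this
      have hor := hMchord i hc
      have hnm := hMmut i
      constructor
      · rintro (h | h)
        · exact absurd h hNa
        · rintro (h' | h')
          · exact hNb h'
          · exact hnm ⟨h, h'⟩
      · intro h
        rcases hor with h' | h'
        · exact Or.inr h'
        · exact absurd (Or.inr h') h
  -- R is constant around the cycle
  have step : ∀ i, R i ↔ R (i + 1) := by
    intro i
    rw [← not_iff_not, ← vertex i, chord i]
  have key : ∀ (n : ℕ) (i : ZMod k), R i ↔ R (i + n) := by
    intro n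
    induction n with
    | zero => intro i; simp
    | succ m ih =>
      intro i
      have h1 : (i + (m + 1 : ℕ) : ZMod k) = (i + m) + 1 := by push_cast; ring
      rw [h1, ← step (i + m)]
      exact ih i
  have const : ∀ i j : ZMod k, R i ↔ R j := by
    intro i j
    have := key (j - i).val i
    rwa [ZMod.natCast_zmod_val, show i + (j - i) = j by ring] at this
  by_cases h0 : R 0
  · -- all R: conclusion (b)
    have hRall : ∀ i, R i := fun i => (const 0 i).mp h0
    have hLnone : ∀ i, ¬ (N i = some (i + 1) ∨ M i = some (i + 1)) := fun i =>
      (hLiff i).not.mp ((not_iff_not.mpr (vertex i)).mpr (not_not.mpr (hRall i)))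
    right
    intro i
    have hji : i - 1 + 1 = i := by ring
    rw [show (s(some (i - 1), some i) : Sym2 (Option (ZMod k)))
        = s(some (i - 1), some ((i - 1) + 1)) by rw [hji],
      show (s(none, some i) : Sym2 (Option (ZMod k)))
        = s(none, some ((i - 1) + 1)) by rw [hji]]
    set j := i - 1 with hj
    constructor
    · intro hs hc
      have hnone : N (j + 1) = none := (hNspoke (j + 1)).mp hs
      rcases hNchord j hc with h | h
      · exact hLnone j (Or.inl h)
      · rw [hnone] at h; exact absurd h (by simp)
    · intro hc
      apply (hNspoke (j + 1)).mpr
      rcases hNshape (j + 1) with h | h | h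
      · exact h
      · exact absurd (Or.inl h) (hLnone (j + 1))
      · rw [hsucc j] at h
        exfalso
        apply hc
        have := hNmem (j + 1)
        rw [h, Sym2.eq_swap] at this
        exact this
  · -- no R: conclusion (a)
    have hRnone : ∀ i, ¬ (N i = some (i - 1) ∨ M i = some (i - 1)) := fun i h =>
      h0 ((const i 0).mp ((hRiff i).mpr h))
    left
    intro i
    constructor
    · intro hs hc
      have hnone : N i = none := (hNspoke i).mp hs
      rcases hNchord i hc with h | h
      · rw [hnone] at h; exact absurd h (by simp)
      · apply hRnone (i + 1)
        left
        rw [hsucc i]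
        exact h
    · intro hc
      apply (hNspoke i).mpr
      rcases hNshape i with h | h | h
      · exact h
      · exfalso
        apply hc
        have := hNmem i
        rw [h] at this
        exact this
      · exact absurd (Or.inl h) (hRnone i)
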